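/- Let P ≥ 1 and let R be a real symmetric positive semidefinite P×P matrix with all diagonal entries equal to 1 and all entries nonnegative. If P is an eigenvalue of R, then R is the all-ones matrix 𝟏𝟏ᵀ; in particular every off-diagonal entry of R equals 1. -/

import Mathlib

open Matrix Finset

/-- **Corollary 1 (matrix-algebraic content).**
A real symmetric positive semidefinite `P×P` matrix with unit diagonal and nonnegative
entries that has `P` as an eigenvalue must be the all-ones matrix `𝟏𝟏ᵀ`; in particular
every off-diagonal entry equals `1`. -/
theorem eigenvalue_P_implies_all_ones
    (P : ℕ) (hP : 1 ≤ P)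
    (R : Matrix (Fin P) (Fin P) ℝ)
    (hpsd : R.PosSemidef)
    (hdiag : ∀ p, R p p = 1)
    (hnonneg : ∀ p q, 0 ≤ R p q)
    (heig : ∃ v : Fin P → ℝ, v ≠ 0 ∧ R.mulVec v = (P : ℝ) • v) :
    R = Matrix.of (fun _ _ => (1 : ℝ)) := by
  obtain ⟨v, hv0, hev⟩ := heig
  have hsym : ∀ p q, R q p = R p q := fun p q => by
    have := hpsd.1.apply q p; simpa using this.symm
  -- entries bounded by 1
  have hle1 : ∀ p q, R p q ≤ 1 := by
    intro p q
    by_cases hpq : p = q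
    · subst hpq; rw [hdiag]
    · have h := hpsd.dotProduct_mulVec_nonneg (fun i => (if i = p then (1:ℝ) else 0) - (if i = q then 1 else 0))
      simp only [star_trivial, dotProduct, mulVec, sub_mul, mul_sub, mul_ite, mul_one, mul_zero,
        ite_mul, one_mul, zero_mul, Finset.sum_sub_distrib, Finset.sum_ite_eq', Finset.mem_univ,
        if_true] at h
      rw [hdiag p, hdiag q, hsym q p] at h
      linarith [hsym p q]
  -- eigen rows
  have hrow : ∀ p, ∑ q, R p q * v q = (P : ℝ) * v p := by
    intro p
    have := congrFun hev p
    simpa [mulVec, dotProduct] using this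
  set s := ∑ p, |v p| with hs
  set t := ∑ p, (v p)^2 with ht
  have h1 : ∑ p, ∑ q, v p * R p q * v q = (P:ℝ) * t := by
    have : ∀ p, ∑ q, v p * R p q * v q = (P:ℝ) * (v p)^2 := by
      intro p
      calc ∑ q, v p * R p q * v q = v p * ∑ q, R p q * v q := by
            rw [Finset.mul_sum]; exact Finset.sum_congr rfl fun q _ => by ring
        _ = (P:ℝ) * (v p)^2 := by rw [hrow p]; ring
    rw [Finset.sum_congr rfl fun p _ => this p, ← Finset.mul_sum]
  have h2 : ∑ p, ∑ q, |v p| * |v q| = s^2 := by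
    rw [sq, Finset.sum_mul_sum]
  have hterm_le : ∀ p q, v p * R p q * v q ≤ |v p| * |v q| := by
    intro p q
    calc v p * R p q * v q ≤ |v p * R p q * v q| := le_abs_self _
      _ = |v p| * R p q * |v q| := by
          rw [abs_mul, abs_mul, abs_of_nonneg (hnonneg p q)]
      _ ≤ |v p| * 1 * |v q| := by
          have hle := hle1 p q
          have ha := abs_nonneg (v p); have hb := abs_nonneg (v q)
          nlinarith [mul_nonneg (mul_nonneg ha hb) (by linarith : (0:ℝ) ≤ 1 - R p q)]
      _ = |v p| * |v q| := by ring
  -- key identity: ∑ (P|v p| - s)^2 = P^2 t - P s^2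
  have hid : ∑ p, ((P:ℝ) * |v p| - s)^2 = (P:ℝ)^2 * t - (P:ℝ) * s^2 := by
    have expand : ∀ p : Fin P, ((P:ℝ) * |v p| - s)^2
        = (P:ℝ)^2 * (v p)^2 - 2*(P:ℝ)*s*|v p| + s^2 := by
      intro p
      rw [sub_sq, mul_pow, sq_abs]; ring
    rw [Finset.sum_congr rfl fun p _ => expand p]
    rw [Finset.sum_add_distrib, Finset.sum_sub_distrib, ← Finset.mul_sum, ← Finset.mul_sum,
        Finset.sum_const, Finset.card_univ, Fintype.card_fin, ← ht, ← hs, nsmul_eq_mul]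
    ring
  have hcs : s^2 ≤ (P:ℝ) * t := by
    have hnn : 0 ≤ ∑ p, ((P:ℝ) * |v p| - s)^2 :=
      Finset.sum_nonneg fun p _ => sq_nonneg _
    rw [hid] at hnn
    have hPpos : (0:ℝ) < P := by exact_mod_cast hP
    nlinarith
  -- sandwich: ∑∑ (|vp||vq| - vp R vq) is nonneg termwise, with total s^2 - P t ≤ 0
  have hdiff0 : ∑ p, ∑ q, (|v p| * |v q| - v p * R p q * v q) = s^2 - (P:ℝ)*t := by
    simp only [Finset.sum_sub_distrib, h2]
    rw [h1]
  have hEq : ∀ p q, |v p| * |v q| = v p * R p q * v q := by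
    have hzero : ∑ p, ∑ q, (|v p| * |v q| - v p * R p q * v q) = 0 := by
      have hge : (0:ℝ) ≤ ∑ p, ∑ q, (|v p| * |v q| - v p * R p q * v q) :=
        Finset.sum_nonneg fun p _ => Finset.sum_nonneg fun q _ => by
          have := hterm_le p q; linarith
      rw [hdiff0] at hge ⊢
      linarith
    intro p q
    have h := (Finset.sum_eq_zero_iff_of_nonneg (fun p _ =>
      Finset.sum_nonneg fun q _ => by have := hterm_le p q; linarith)).mp hzero p (Finset.mem_univ p)
    have h' := (Finset.sum_eq_zero_iff_of_nonneg (fun q _ => by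
      have := hterm_le p q; linarith)).mp h q (Finset.mem_univ q)
    linarith
  -- s^2 = P t, hence all |v p| equal s/P > 0
  have hseq : s^2 = (P:ℝ) * t := by
    have := hdiff0
    have hzero : ∑ p, ∑ q, (|v p| * |v q| - v p * R p q * v q) = 0 :=
      Finset.sum_eq_zero fun p _ => Finset.sum_eq_zero fun q _ => by
        have := hEq p q; linarith
    rw [hzero] at this; linarith
  have hconst : ∀ p, (P:ℝ) * |v p| = s := by
    intro p
    have hzero : ∑ p, ((P:ℝ) * |v p| - s)^2 = 0 := by
      rw [hid, hseq]; ring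
    have := (Finset.sum_eq_zero_iff_of_nonneg (fun p _ => sq_nonneg _)).mp hzero p
      (Finset.mem_univ p)
    have := sq_eq_zero_iff.mp this
    linarith
  have hsnn : (0:ℝ) ≤ s := Finset.sum_nonneg fun p _ => abs_nonneg (v p)
  have hPpos : (0:ℝ) < P := by exact_mod_cast hP
  have hspos : 0 < s := by
    rcases hsnn.lt_or_eq with h | h
    · exact h
    · exfalso; apply hv0; funext p
      have hp : (P:ℝ) * |v p| = 0 := by rw [hconst p, ← h]
      rcases mul_eq_zero.mp hp with hc | hc
      · exact absurd hc (ne_of_gt hPpos)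
      · show v p = 0
        exact abs_eq_zero.mp hc
  have hvne : ∀ p, v p ≠ 0 := by
    intro p hvp
    have := hconst p
    rw [hvp] at this
    simp at this
    linarith
  -- conclude
  ext p q
  simp only [Matrix.of_apply]
  have h := hEq p q
  have hpos : 0 < |v p| * |v q| :=
    mul_pos (abs_pos.mpr (hvne p)) (abs_pos.mpr (hvne q))
  have hvpq : 0 < v p * v q := by
    by_contra hc
    push_neg at hc
    have : v p * R p q * v q ≤ 0 := by nlinarith [hnonneg p q]
    linarith
  have habs : |v p| * |v q| = v p * v q := by
    rw [← abs_mul]; exact abs_of_pos hvpq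
  rw [habs] at h
  have h' : (v p * v q) * R p q = (v p * v q) * 1 := by
    rw [mul_one]; linear_combination -h
  exact mul_left_cancel₀ (ne_of_gt hvpq) h'
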